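/- arXiv:2409.19602 — 2 statements merged into one kernel-verified Lean document; each statement's English description precedes it below -/
import Mathlib

section
/- Let R be a Γ-graded integral domain and ⋆ a homogeneous star operation on R. Then the classical star operation e(⋆) is an extension of ⋆: for every nonzero homogeneous fractional ideal A of R, A^{e(⋆)} = A^⋆. -/
open FractionalIdeal
open scoped Classical

section Setup

variable {Γ : Type*} [AddCommMonoid Γ] [LinearOrder Γ] [IsOrderedCancelAddMonoid Γ] [DecidableEq Γ]
  {R : Type*} [CommRing R] [IsDomain R]
  (𝒜 : Γ → AddSubgroup R) [GradedRing 𝒜]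
  (K : Type*) [Field K] [Algebra R K] [IsFractionRing R K]

/-- The integral ideal corresponding to a fractional ideal contained in `R`. -/
def idealOf (J : FractionalIdeal (nonZeroDivisors R) K) : Ideal R :=
  (J : Submodule R K).comap (Algebra.linearMap R K)

/-- An integral ideal is homogeneous if it contains all homogeneous components of its elements. -/
def IsHomIdeal (I : Ideal R) : Prop := ∀ f ∈ I, ∀ γ : Γ, GradedRing.proj 𝒜 γ f ∈ I

/-- `C(I)`: the homogeneous ideal generated by the homogeneous components of elements of `I`. -/
def homC (I : Ideal R) : Ideal R :=
  Ideal.span {x | ∃ f ∈ I, ∃ γ : Γ, x = GradedRing.proj 𝒜 γ f}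

/-- `C(J)` for a fractional ideal `J ⊆ R`, as a fractional ideal. -/
def Cfrac (J : FractionalIdeal (nonZeroDivisors R) K) : FractionalIdeal (nonZeroDivisors R) K :=
  ↑(homC 𝒜 (idealOf K J))

/-- A fractional ideal is homogeneous if some nonzero homogeneous `s ∈ R` multiplies it into a
homogeneous integral ideal. -/
def IsHomFrac (A : FractionalIdeal (nonZeroDivisors R) K) : Prop :=
  ∃ s : R, s ≠ 0 ∧ SetLike.IsHomogeneousElem 𝒜 s ∧
    spanSingleton (nonZeroDivisors R) (algebraMap R K s) * A ≤ 1 ∧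
    IsHomIdeal 𝒜 (idealOf K (spanSingleton (nonZeroDivisors R) (algebraMap R K s) * A))

/-- A homogeneous element of the homogeneous quotient field, viewed inside `K`. -/
def IsHomElem (x : K) : Prop :=
  ∃ a b : R, SetLike.IsHomogeneousElem 𝒜 a ∧ SetLike.IsHomogeneousElem 𝒜 b ∧ b ≠ 0 ∧
    x * algebraMap R K b = algebraMap R K a

end Setup

/-- A homogeneous star operation on the graded domain `R`. -/
structure HomStarOp {Γ : Type*} [AddCommMonoid Γ] [LinearOrder Γ] [IsOrderedCancelAddMonoid Γ] [DecidableEq Γ]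
    {R : Type*} [CommRing R] [IsDomain R] (𝒜 : Γ → AddSubgroup R) [GradedRing 𝒜]
    (K : Type*) [Field K] [Algebra R K] [IsFractionRing R K] where
  toFun : FractionalIdeal (nonZeroDivisors R) K → FractionalIdeal (nonZeroDivisors R) K
  hom : ∀ A, A ≠ 0 → IsHomFrac 𝒜 K A → IsHomFrac 𝒜 K (toFun A)
  map_span : ∀ x : K, x ≠ 0 → IsHomElem 𝒜 K x →
    toFun (spanSingleton (nonZeroDivisors R) x) = spanSingleton (nonZeroDivisors R) x
  map_smul : ∀ x : K, x ≠ 0 → IsHomElem 𝒜 K x → ∀ A, A ≠ 0 → IsHomFrac 𝒜 K A →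
    toFun (spanSingleton (nonZeroDivisors R) x * A) = spanSingleton (nonZeroDivisors R) x * toFun A
  le_star : ∀ A, A ≠ 0 → IsHomFrac 𝒜 K A → A ≤ toFun A
  mono : ∀ A B, A ≠ 0 → B ≠ 0 → IsHomFrac 𝒜 K A → IsHomFrac 𝒜 K B → A ≤ B → toFun A ≤ toFun B
  idem : ∀ A, A ≠ 0 → IsHomFrac 𝒜 K A → toFun (toFun A) = toFun A

/-- A classical star operation on the domain `R`. -/
structure StarOp (R : Type*) [CommRing R] [IsDomain R]
    (K : Type*) [Field K] [Algebra R K] [IsFractionRing R K] where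
  toFun : FractionalIdeal (nonZeroDivisors R) K → FractionalIdeal (nonZeroDivisors R) K
  map_span : ∀ x : K, x ≠ 0 →
    toFun (spanSingleton (nonZeroDivisors R) x) = spanSingleton (nonZeroDivisors R) x
  map_smul : ∀ x : K, x ≠ 0 → ∀ A, A ≠ 0 →
    toFun (spanSingleton (nonZeroDivisors R) x * A) = spanSingleton (nonZeroDivisors R) x * toFun A
  le_star : ∀ A, A ≠ 0 → A ≤ toFun A
  mono : ∀ A B, A ≠ 0 → B ≠ 0 → A ≤ B → toFun A ≤ toFun B
  idem : ∀ A, A ≠ 0 → toFun (toFun A) = toFun A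

section EStar

variable {Γ : Type*} [AddCommMonoid Γ] [LinearOrder Γ] [IsOrderedCancelAddMonoid Γ] [DecidableEq Γ]
  {R : Type*} [CommRing R] [IsDomain R]
  (𝒜 : Γ → AddSubgroup R) [GradedRing 𝒜]
  (K : Type*) [Field K] [Algebra R K] [IsFractionRing R K]

/-- The submodule `⋂ { z⁻¹ (C(zA))^⋆ : 0 ≠ z ∈ (R : A) }`. -/
def eStarSub (s : HomStarOp 𝒜 K) (A : FractionalIdeal (nonZeroDivisors R) K) : Submodule R K :=
  ⨅ z ∈ {z : K | z ≠ 0 ∧ spanSingleton (nonZeroDivisors R) z * A ≤ 1},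
    ↑(spanSingleton (nonZeroDivisors R) z⁻¹ *
      s.toFun (Cfrac 𝒜 K (spanSingleton (nonZeroDivisors R) z * A)))

/-- The extension `e(⋆)` of a homogeneous star operation `⋆`,
`A^{e(⋆)} := ⋂ { z⁻¹ (C(zA))^⋆ : 0 ≠ z ∈ (R : A) }` (which is a fractional ideal whenever
`A` is a nonzero fractional ideal). -/
noncomputable def eStar (s : HomStarOp 𝒜 K) (A : FractionalIdeal (nonZeroDivisors R) K) :
    FractionalIdeal (nonZeroDivisors R) K :=
  if h : IsFractional (nonZeroDivisors R) (eStarSub 𝒜 K s A) then ⟨_, h⟩ else 0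

end EStar


section AuxLemmas

set_option linter.unusedSectionVars false

variable {Γ : Type*} [AddCommMonoid Γ] [LinearOrder Γ] [IsOrderedCancelAddMonoid Γ] [DecidableEq Γ]
  {R : Type*} [CommRing R] [IsDomain R]
  (𝒜 : Γ → AddSubgroup R) [GradedRing 𝒜]
  (K : Type*) [Field K] [Algebra R K] [IsFractionRing R K]

lemma isHomIdeal_iff (I : Ideal R) : IsHomIdeal 𝒜 I ↔ Ideal.IsHomogeneous 𝒜 I := by
  unfold IsHomIdeal Ideal.IsHomogeneous
  simp_rw [GradedRing.proj_apply]
  exact ⟨fun h i r hr => h r hr i, fun h r hr i => h i hr⟩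

lemma le_homC (I : Ideal R) : I ≤ homC 𝒜 I := fun f hf => by
  rw [← DirectSum.sum_support_decompose 𝒜 f]
  exact Ideal.sum_mem _ fun γ _ =>
    Ideal.subset_span ⟨f, hf, γ, (GradedRing.proj_apply 𝒜 γ f).symm⟩

lemma homC_isHom (I : Ideal R) : IsHomIdeal 𝒜 (homC 𝒜 I) := by
  rw [isHomIdeal_iff]
  refine Ideal.homogeneous_span 𝒜 _ fun x hx => ?_
  obtain ⟨f, _, γ, rfl⟩ := hx
  exact ⟨γ, by rw [GradedRing.proj_apply]; exact SetLike.coe_mem _⟩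

lemma homC_eq_self (I : Ideal R) (hI : IsHomIdeal 𝒜 I) : homC 𝒜 I = I := by
  refine le_antisymm (Ideal.span_le.mpr ?_) (le_homC 𝒜 I)
  rintro x ⟨f, hf, γ, rfl⟩
  exact hI f hf γ

lemma idealOf_coeIdeal (I : Ideal R) :
    idealOf K (I : FractionalIdeal (nonZeroDivisors R) K) = I := by
  ext x
  simp only [idealOf, Submodule.mem_comap, Algebra.linearMap_apply, FractionalIdeal.mem_coe,
    FractionalIdeal.mem_coeIdeal]
  constructor
  · rintro ⟨a, ha, h⟩
    rwa [IsFractionRing.injective R K h] at ha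
  · exact fun h => ⟨x, h, rfl⟩

lemma coeIdeal_idealOf (J : FractionalIdeal (nonZeroDivisors R) K) (hJ : J ≤ 1) :
    (idealOf K J : FractionalIdeal (nonZeroDivisors R) K) = J := by
  ext x
  simp only [FractionalIdeal.mem_coeIdeal, idealOf, Submodule.mem_comap,
    Algebra.linearMap_apply, FractionalIdeal.mem_coe]
  constructor
  · rintro ⟨a, ha, rfl⟩; exact ha
  · intro hx
    obtain ⟨a, rfl⟩ := (FractionalIdeal.mem_one_iff _).mp (hJ hx)
    exact ⟨a, hx, rfl⟩

lemma isHomElem_algebraMap {a : R} (ha : SetLike.IsHomogeneousElem 𝒜 a) :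
    IsHomElem 𝒜 K (algebraMap R K a) :=
  ⟨a, 1, ha, ⟨0, SetLike.one_mem_graded 𝒜⟩, one_ne_zero, by simp⟩

lemma isHomFrac_coeIdeal (I : Ideal R) (hI : IsHomIdeal 𝒜 I) :
    IsHomFrac 𝒜 K (I : FractionalIdeal (nonZeroDivisors R) K) := by
  refine ⟨1, one_ne_zero, ⟨0, SetLike.one_mem_graded 𝒜⟩, ?_, ?_⟩
  · rw [_root_.map_one, spanSingleton_one, one_mul]
    exact coeIdeal_le_one
  · rw [_root_.map_one, spanSingleton_one, one_mul, idealOf_coeIdeal]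
    exact hI

lemma span_inv_span {z : K} (hz : z ≠ 0) (B : FractionalIdeal (nonZeroDivisors R) K) :
    spanSingleton (nonZeroDivisors R) z⁻¹ * (spanSingleton (nonZeroDivisors R) z * B) = B := by
  rw [← mul_assoc, spanSingleton_mul_spanSingleton, inv_mul_cancel₀ hz, spanSingleton_one, one_mul]

lemma span_mul_ne_zero {z : K} (hz : z ≠ 0) {A : FractionalIdeal (nonZeroDivisors R) K}
    (hA : A ≠ 0) : spanSingleton (nonZeroDivisors R) z * A ≠ 0 := by
  intro h
  apply hA
  rw [← span_inv_span K hz A, h, mul_zero]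

lemma starA_le_term (s : HomStarOp 𝒜 K) (A : FractionalIdeal (nonZeroDivisors R) K)
    (hA : A ≠ 0) (hhom : IsHomFrac 𝒜 K A) {z : K} (hz : z ≠ 0)
    (hz1 : spanSingleton (nonZeroDivisors R) z * A ≤ 1) :
    s.toFun A ≤ spanSingleton (nonZeroDivisors R) z⁻¹ *
      s.toFun (Cfrac 𝒜 K (spanSingleton (nonZeroDivisors R) z * A)) := by
  classical
  simp only [Cfrac]
  obtain ⟨s₀, hs₀ne, hs₀hom, hs₀le, hs₀hi⟩ := id hhom
  set z₀ : K := algebraMap R K s₀ with hz₀def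
  have hz₀ne : z₀ ≠ 0 := by
    rw [hz₀def]
    exact (map_ne_zero_iff _ (IsFractionRing.injective R K)).mpr hs₀ne
  set J : Ideal R := idealOf K (spanSingleton (nonZeroDivisors R) z₀ * A) with hJdef
  have hJhomI : IsHomIdeal 𝒜 J := hs₀hi
  have hJcoe : (J : FractionalIdeal (nonZeroDivisors R) K) =
      spanSingleton (nonZeroDivisors R) z₀ * A := coeIdeal_idealOf K _ hs₀le
  have hJfrac : IsHomFrac 𝒜 K (J : FractionalIdeal (nonZeroDivisors R) K) :=
    isHomFrac_coeIdeal 𝒜 K J hJhomI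
  have hJne : (J : FractionalIdeal (nonZeroDivisors R) K) ≠ 0 := by
    rw [hJcoe]; exact span_mul_ne_zero K hz₀ne hA
  set I : Ideal R := homC 𝒜 (idealOf K (spanSingleton (nonZeroDivisors R) z * A)) with hIdef
  have hIhom : IsHomIdeal 𝒜 I := homC_isHom 𝒜 _
  have hIfrac : IsHomFrac 𝒜 K (I : FractionalIdeal (nonZeroDivisors R) K) :=
    isHomFrac_coeIdeal 𝒜 K I hIhom
  have hzA_le_I : spanSingleton (nonZeroDivisors R) z * A ≤
      (I : FractionalIdeal (nonZeroDivisors R) K) := by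
    rw [← coeIdeal_idealOf K (spanSingleton (nonZeroDivisors R) z * A) hz1]
    exact (coeIdeal_le_coeIdeal K).mpr (le_homC 𝒜 _)
  have hIne : (I : FractionalIdeal (nonZeroDivisors R) K) ≠ 0 := by
    intro h
    exact span_mul_ne_zero K hz hA (le_antisymm (h ▸ hzA_le_I) (zero_le _))
  set y : K := z * z₀⁻¹ with hydef
  have hyne : y ≠ 0 := mul_ne_zero hz (inv_ne_zero hz₀ne)
  have hz_eq : z = y * z₀ := by
    rw [hydef]; field_simp
  have hyJ : spanSingleton (nonZeroDivisors R) y * (J : FractionalIdeal (nonZeroDivisors R) K) =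
      spanSingleton (nonZeroDivisors R) z * A := by
    rw [hJcoe, ← mul_assoc, spanSingleton_mul_spanSingleton, ← hz_eq]
  -- a nonzero homogeneous element of J
  have hJbot : J ≠ ⊥ := by
    intro h
    apply hJne
    rw [h]
    exact coeIdeal_bot
  obtain ⟨f0, hf0J, hf0ne⟩ := (Submodule.ne_bot_iff J).mp hJbot
  obtain ⟨γ0, hγ0⟩ : ∃ γ : Γ, GradedRing.proj 𝒜 γ f0 ≠ 0 := by
    by_contra hcon
    push_neg at hcon
    apply hf0ne
    rw [← DirectSum.sum_support_decompose 𝒜 f0]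
    refine Finset.sum_eq_zero fun γ _ => ?_
    rw [← GradedRing.proj_apply]
    exact hcon γ
  set j : R := GradedRing.proj 𝒜 γ0 f0 with hjdef
  have hjJ : j ∈ J := hJhomI f0 hf0J γ0
  have hjne : j ≠ 0 := hγ0
  have hjhom : SetLike.IsHomogeneousElem 𝒜 j :=
    ⟨γ0, by rw [hjdef, GradedRing.proj_apply]; exact SetLike.coe_mem _⟩
  have hjK : algebraMap R K j ≠ 0 :=
    (map_ne_zero_iff _ (IsFractionRing.injective R K)).mpr hjne
  -- membership of y * (elements of J) in I
  have hymem : ∀ u ∈ J, y * algebraMap R K u ∈ (I : FractionalIdeal (nonZeroDivisors R) K) := by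
    intro u huJ
    apply hzA_le_I
    rw [← hyJ]
    exact mul_mem_mul (mem_spanSingleton_self _ y) ((mem_coeIdeal _).mpr ⟨u, huJ, rfl⟩)
  obtain ⟨f, hfI, hf⟩ := (mem_coeIdeal _).mp (hymem j hjJ)
  -- the key ideal-level estimate
  have hmulhom : (Ideal.span {j} * I).IsHomogeneous 𝒜 :=
    Ideal.IsHomogeneous.mul
      (Ideal.homogeneous_span 𝒜 {j} fun x hx => by
        rw [Set.mem_singleton_iff] at hx; exact hx ▸ hjhom)
      ((isHomIdeal_iff 𝒜 I).mp hIhom)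
  have keyh : ∀ (γ δ : Γ), ∀ u ∈ J, u ∈ 𝒜 δ →
      GradedRing.proj 𝒜 γ f * u ∈ Ideal.span {j} * I := by
    intro γ δ u huJ huδ
    obtain ⟨m, hmI, hm⟩ := (mem_coeIdeal _).mp (hymem u huJ)
    have hfu : f * u = j * m := by
      apply IsFractionRing.injective R K
      rw [_root_.map_mul, _root_.map_mul, hf, hm]
      ring
    have h1 : GradedRing.proj 𝒜 γ f * u = GradedRing.proj 𝒜 (γ + δ) (f * u) := by
      letI : AddRightCancelMonoid Γ :=
        { (inferInstance : AddCommMonoid Γ) with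
          add_right_cancel := fun a => IsRightCancelAdd.add_right_cancel a }
      rw [GradedRing.proj_apply, GradedRing.proj_apply,
        DirectSum.coe_decompose_mul_add_of_right_mem 𝒜 huδ]
    rw [h1, hfu, GradedRing.proj_apply]
    exact hmulhom (γ + δ) (Ideal.mul_mem_mul (Ideal.subset_span rfl) hmI)
  have key : ∀ γ : Γ, ∀ u ∈ J, GradedRing.proj 𝒜 γ f * u ∈ Ideal.span {j} * I := by
    intro γ u huJ
    have hu : GradedRing.proj 𝒜 γ f * u = ∑ δ ∈ (DirectSum.decompose 𝒜 u).support,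
        GradedRing.proj 𝒜 γ f * ↑(DirectSum.decompose 𝒜 u δ) := by
      rw [← Finset.mul_sum, DirectSum.sum_support_decompose]
    rw [hu]
    refine Ideal.sum_mem _ fun δ _ => ?_
    refine keyh γ δ _ ?_ (SetLike.coe_mem _)
    have := hJhomI u huJ δ
    rwa [GradedRing.proj_apply] at this
  have hideal : ∀ γ : Γ, Ideal.span {GradedRing.proj 𝒜 γ f} * J ≤ Ideal.span {j} * I := by
    intro γ
    rw [Ideal.mul_le]
    intro r hr u huJ
    obtain ⟨c, rfl⟩ := Ideal.mem_span_singleton'.mp hr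
    rw [mul_assoc]
    exact Ideal.mul_mem_left _ c (key γ u huJ)
  -- fractional-ideal level, per homogeneous component of f
  have hyγJ_le : ∀ γ : Γ, spanSingleton (nonZeroDivisors R)
      ((algebraMap R K j)⁻¹ * algebraMap R K (GradedRing.proj 𝒜 γ f)) *
      (J : FractionalIdeal (nonZeroDivisors R) K) ≤
      (I : FractionalIdeal (nonZeroDivisors R) K) := by
    intro γ
    have hfrac_le : spanSingleton (nonZeroDivisors R)
        (algebraMap R K (GradedRing.proj 𝒜 γ f)) * (J : FractionalIdeal (nonZeroDivisors R) K) ≤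
        spanSingleton (nonZeroDivisors R) (algebraMap R K j) *
          (I : FractionalIdeal (nonZeroDivisors R) K) := by
      rw [← coeIdeal_span_singleton, ← coeIdeal_span_singleton, ← coeIdeal_mul, ← coeIdeal_mul]
      exact (coeIdeal_le_coeIdeal K).mpr (hideal γ)
    calc spanSingleton (nonZeroDivisors R)
          ((algebraMap R K j)⁻¹ * algebraMap R K (GradedRing.proj 𝒜 γ f)) *
          (J : FractionalIdeal (nonZeroDivisors R) K)
        = spanSingleton (nonZeroDivisors R) (algebraMap R K j)⁻¹ *
            (spanSingleton (nonZeroDivisors R) (algebraMap R K (GradedRing.proj 𝒜 γ f)) *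
              (J : FractionalIdeal (nonZeroDivisors R) K)) := by
          rw [← mul_assoc, spanSingleton_mul_spanSingleton]
      _ ≤ spanSingleton (nonZeroDivisors R) (algebraMap R K j)⁻¹ *
            (spanSingleton (nonZeroDivisors R) (algebraMap R K j) *
              (I : FractionalIdeal (nonZeroDivisors R) K)) := mul_right_mono hfrac_le
      _ = (I : FractionalIdeal (nonZeroDivisors R) K) := span_inv_span K hjK _
  have heq : ∀ γ : Γ, spanSingleton (nonZeroDivisors R) (algebraMap R K j) *
      (spanSingleton (nonZeroDivisors R)
        ((algebraMap R K j)⁻¹ * algebraMap R K (GradedRing.proj 𝒜 γ f)) *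
        (J : FractionalIdeal (nonZeroDivisors R) K)) =
      ((Ideal.span {GradedRing.proj 𝒜 γ f} * J : Ideal R) :
        FractionalIdeal (nonZeroDivisors R) K) := by
    intro γ
    rw [← mul_assoc, spanSingleton_mul_spanSingleton, mul_inv_cancel_left₀ hjK,
      coeIdeal_mul, coeIdeal_span_singleton]
  have hyγfrac : ∀ γ : Γ, IsHomFrac 𝒜 K (spanSingleton (nonZeroDivisors R)
      ((algebraMap R K j)⁻¹ * algebraMap R K (GradedRing.proj 𝒜 γ f)) *
      (J : FractionalIdeal (nonZeroDivisors R) K)) := by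
    intro γ
    have hsp : (Ideal.span {GradedRing.proj 𝒜 γ f} * J).IsHomogeneous 𝒜 :=
      Ideal.IsHomogeneous.mul
        (Ideal.homogeneous_span 𝒜 _ fun x hx => by
          rw [Set.mem_singleton_iff] at hx
          exact hx ▸ ⟨γ, by rw [GradedRing.proj_apply]; exact SetLike.coe_mem _⟩)
        ((isHomIdeal_iff 𝒜 J).mp hJhomI)
    refine ⟨j, hjne, hjhom, ?_, ?_⟩
    · rw [heq γ]
      exact coeIdeal_le_one
    · rw [heq γ, idealOf_coeIdeal]
      exact (isHomIdeal_iff 𝒜 _).mpr hsp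
  -- star-level estimate per component
  have hstep : ∀ γ : Γ, spanSingleton (nonZeroDivisors R)
      ((algebraMap R K j)⁻¹ * algebraMap R K (GradedRing.proj 𝒜 γ f)) *
      s.toFun (J : FractionalIdeal (nonZeroDivisors R) K) ≤
      s.toFun (I : FractionalIdeal (nonZeroDivisors R) K) := by
    intro γ
    by_cases h0 : GradedRing.proj 𝒜 γ f = 0
    · rw [h0, _root_.map_zero, mul_zero, spanSingleton_zero, zero_mul]
      exact zero_le _
    · have hfγK : algebraMap R K (GradedRing.proj 𝒜 γ f) ≠ 0 :=
        (map_ne_zero_iff _ (IsFractionRing.injective R K)).mpr h0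
      have hYne : (algebraMap R K j)⁻¹ * algebraMap R K (GradedRing.proj 𝒜 γ f) ≠ 0 :=
        mul_ne_zero (inv_ne_zero hjK) hfγK
      have hYhom : IsHomElem 𝒜 K
          ((algebraMap R K j)⁻¹ * algebraMap R K (GradedRing.proj 𝒜 γ f)) := by
        refine ⟨GradedRing.proj 𝒜 γ f, j,
          ⟨γ, by rw [GradedRing.proj_apply]; exact SetLike.coe_mem _⟩, hjhom, hjne, ?_⟩
        field_simp
      rw [← s.map_smul _ hYne hYhom _ hJne hJfrac]
      exact s.mono _ _ (span_mul_ne_zero K hYne hJne) hIne (hyγfrac γ) hIfrac (hyγJ_le γ)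
  -- sum the components
  have hysum : ∑ γ ∈ (DirectSum.decompose 𝒜 f).support,
      ((algebraMap R K j)⁻¹ * algebraMap R K (GradedRing.proj 𝒜 γ f)) = y := by
    have halg : ∑ γ ∈ (DirectSum.decompose 𝒜 f).support,
        algebraMap R K (GradedRing.proj 𝒜 γ f) = algebraMap R K f := by
      rw [← map_sum]
      congr 1
      simp_rw [GradedRing.proj_apply]
      exact DirectSum.sum_support_decompose 𝒜 f
    rw [← Finset.mul_sum, halg, hf, mul_comm y, inv_mul_cancel_left₀ hjK]
  have hsum_le : spanSingleton (nonZeroDivisors R) y *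
      s.toFun (J : FractionalIdeal (nonZeroDivisors R) K) ≤
      s.toFun (I : FractionalIdeal (nonZeroDivisors R) K) := by
    rw [FractionalIdeal.mul_le]
    intro i hi w hw
    obtain ⟨c, rfl⟩ := (mem_spanSingleton _).mp hi
    have hyw : y * w ∈ s.toFun (I : FractionalIdeal (nonZeroDivisors R) K) := by
      rw [← hysum, Finset.sum_mul, ← FractionalIdeal.mem_coe]
      exact Submodule.sum_mem _ fun γ _ => FractionalIdeal.mem_coe.mpr
        ((hstep γ) (mul_mem_mul (mem_spanSingleton_self _ _) hw))
    rw [smul_mul_assoc, ← FractionalIdeal.mem_coe]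
    rw [← FractionalIdeal.mem_coe] at hyw
    exact Submodule.smul_mem _ c hyw
  have hzstar : spanSingleton (nonZeroDivisors R) z * s.toFun A =
      spanSingleton (nonZeroDivisors R) y *
        s.toFun (J : FractionalIdeal (nonZeroDivisors R) K) := by
    rw [hJcoe, s.map_smul z₀ hz₀ne (isHomElem_algebraMap 𝒜 K hs₀hom) A hA hhom,
      ← mul_assoc, spanSingleton_mul_spanSingleton, ← hz_eq]
  calc s.toFun A
      = spanSingleton (nonZeroDivisors R) z⁻¹ *
          (spanSingleton (nonZeroDivisors R) z * s.toFun A) := (span_inv_span K hz _).symm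
    _ = spanSingleton (nonZeroDivisors R) z⁻¹ *
          (spanSingleton (nonZeroDivisors R) y *
            s.toFun (J : FractionalIdeal (nonZeroDivisors R) K)) := by rw [hzstar]
    _ ≤ spanSingleton (nonZeroDivisors R) z⁻¹ *
          s.toFun (I : FractionalIdeal (nonZeroDivisors R) K) := mul_right_mono hsum_le

end AuxLemmas


/-- `e(⋆)` extends `⋆`: `A^{e(⋆)} = A^⋆` for nonzero homogeneous fractional `A`. -/
theorem stmt_2
    {Γ : Type*} [AddCommMonoid Γ] [LinearOrder Γ] [IsOrderedCancelAddMonoid Γ] [DecidableEq Γ]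
    {R : Type*} [CommRing R] [IsDomain R]
    (𝒜 : Γ → AddSubgroup R) [GradedRing 𝒜]
    (K : Type*) [Field K] [Algebra R K] [IsFractionRing R K]
    (s : HomStarOp 𝒜 K) (A : FractionalIdeal (nonZeroDivisors R) K)
    (hA : A ≠ 0) (hhom : IsHomFrac 𝒜 K A) :
    eStar 𝒜 K s A = s.toFun A := by
  classical
  have hhom' := hhom
  obtain ⟨s₀, hs₀ne, hs₀hom, hs₀le, hs₀hi⟩ := hhom'
  set z₀ : K := algebraMap R K s₀ with hz₀def
  have hz₀ne : z₀ ≠ 0 := by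
    rw [hz₀def]
    exact (map_ne_zero_iff _ (IsFractionRing.injective R K)).mpr hs₀ne
  have hz₀mem : z₀ ∈ {z : K | z ≠ 0 ∧ spanSingleton (nonZeroDivisors R) z * A ≤ 1} :=
    ⟨hz₀ne, hs₀le⟩
  have hCf : Cfrac 𝒜 K (spanSingleton (nonZeroDivisors R) z₀ * A) =
      spanSingleton (nonZeroDivisors R) z₀ * A := by
    rw [Cfrac, homC_eq_self 𝒜 _ hs₀hi, coeIdeal_idealOf K _ hs₀le]
  have hterm : spanSingleton (nonZeroDivisors R) z₀⁻¹ *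
      s.toFun (Cfrac 𝒜 K (spanSingleton (nonZeroDivisors R) z₀ * A)) = s.toFun A := by
    rw [hCf, s.map_smul z₀ hz₀ne (isHomElem_algebraMap 𝒜 K hs₀hom) A hA hhom,
      span_inv_span K hz₀ne]
  have hsub : eStarSub 𝒜 K s A = (s.toFun A : Submodule R K) := by
    apply le_antisymm
    · refine le_trans (iInf₂_le z₀ hz₀mem) ?_
      rw [hterm]
    · refine le_iInf₂ fun z hz => ?_
      exact coe_le_coe.mpr (starA_le_term 𝒜 K s A hA hhom hz.1 hz.2)
  rw [eStar]
  have hfr : IsFractional (nonZeroDivisors R) (eStarSub 𝒜 K s A) := by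
    rw [hsub]
    exact (s.toFun A).isFractional
  refine (dif_pos hfr).trans ?_
  exact FractionalIdeal.coeToSubmodule_injective hsub
end

section
/- Let R be a Γ-graded integral domain and ★ : F(R) → F(R) a classical star operation on R. Define, for each F ∈ F(R), F^{★̄} := ⋃ { (F : I) : I is a nonzero integral ideal of R with I^★ = R }. Then for every homogeneous fractional ideal A of R, A^{★̄} is again a homogeneous fractional ideal; i.e., the stable star operation ★̄ associated to ★ is homogeneous preserving. -/
set_option linter.unusedSectionVars false
set_option maxHeartbeats 1000000


open FractionalIdeal
open scoped Classical

/-- The stable closure `F^{★̄} = ⋃ { (F : I) : I nonzero integral ideal, I^★ = R }`. -/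
def starBarSet {R : Type*} [CommRing R] [IsDomain R]
    (K : Type*) [Field K] [Algebra R K] [IsFractionRing R K]
    (t : FractionalIdeal (nonZeroDivisors R) K → FractionalIdeal (nonZeroDivisors R) K)
    (F : FractionalIdeal (nonZeroDivisors R) K) : Set K :=
  ⋃ I ∈ {I : Ideal R | I ≠ 0 ∧ t (↑I : FractionalIdeal (nonZeroDivisors R) K) = 1},
    {x : K | ∀ i ∈ I, x * algebraMap R K i ∈ F}

section DMSection

open DirectSum

variable {Γ : Type*} [AddCommMonoid Γ] [LinearOrder Γ] [IsOrderedCancelAddMonoid Γ] [DecidableEq Γ]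
  {R : Type*} [CommRing R] [IsDomain R]
  (𝒜 : Γ → AddSubgroup R) [GradedRing 𝒜]

lemma proj_mem (γ : Γ) (f : R) : GradedRing.proj 𝒜 γ f ∈ 𝒜 γ := by
  rw [GradedRing.proj_apply]; exact SetLike.coe_mem _

lemma sum_proj (f : R) :
    ∑ γ ∈ (decompose 𝒜 f).support, GradedRing.proj 𝒜 γ f = f := by
  simpa [GradedRing.proj_apply] using DirectSum.sum_support_decompose 𝒜 f

lemma proj_of_mem {α γ : Γ} {a : R} (ha : a ∈ 𝒜 α) :
    GradedRing.proj 𝒜 γ a = if γ = α then a else 0 := by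
  rw [GradedRing.proj_apply]
  split_ifs with h
  · subst h; exact DirectSum.decompose_of_mem_same 𝒜 ha
  · exact DirectSum.decompose_of_mem_ne 𝒜 ha (Ne.symm h)

lemma proj_mul_expand (f g : R) (δ : Γ) :
    GradedRing.proj 𝒜 δ (f * g) =
      ∑ p ∈ ((decompose 𝒜 f).support ×ˢ (decompose 𝒜 g).support).filter
          (fun p => p.1 + p.2 = δ),
        GradedRing.proj 𝒜 p.1 f * GradedRing.proj 𝒜 p.2 g := by
  have key : ∀ γ₁ γ₂ : Γ, GradedRing.proj 𝒜 δ (GradedRing.proj 𝒜 γ₁ f * GradedRing.proj 𝒜 γ₂ g)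
      = if γ₁ + γ₂ = δ then GradedRing.proj 𝒜 γ₁ f * GradedRing.proj 𝒜 γ₂ g else 0 := by
    intro γ₁ γ₂
    have hmem : GradedRing.proj 𝒜 γ₁ f * GradedRing.proj 𝒜 γ₂ g ∈ 𝒜 (γ₁ + γ₂) :=
      SetLike.mul_mem_graded (proj_mem 𝒜 γ₁ f) (proj_mem 𝒜 γ₂ g)
    rw [proj_of_mem 𝒜 hmem]
    simp only [eq_comm]
  conv_lhs => rw [← sum_proj 𝒜 f, ← sum_proj 𝒜 g]
  rw [Finset.sum_mul_sum, map_sum]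
  rw [Finset.sum_filter, Finset.sum_product]
  simp only [map_sum, key]

lemma top_expand {f : R} {α : Γ} (hαmem : α ∈ (decompose 𝒜 f).support)
    (hαtop : ∀ γ ∈ (decompose 𝒜 f).support, γ ≤ α) (i : R) (β : Γ) :
    GradedRing.proj 𝒜 α f * GradedRing.proj 𝒜 β i =
      GradedRing.proj 𝒜 (α + β) (f * i) -
      ∑ p ∈ ((decompose 𝒜 f).support ×ˢ (decompose 𝒜 i).support).filter
          (fun p => p.1 + p.2 = α + β ∧ p.1 ≠ α),
        GradedRing.proj 𝒜 p.1 f * GradedRing.proj 𝒜 p.2 i := by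
  rw [proj_mul_expand]
  rw [eq_sub_iff_add_eq]
  have hsplit := Finset.sum_filter_add_sum_filter_not
    (((decompose 𝒜 f).support ×ˢ (decompose 𝒜 i).support).filter (fun p => p.1 + p.2 = α + β))
    (fun p => p.1 = α)
    (fun p => GradedRing.proj 𝒜 p.1 f * GradedRing.proj 𝒜 p.2 i)
  have h1 : (((decompose 𝒜 f).support ×ˢ (decompose 𝒜 i).support).filter
        (fun p => p.1 + p.2 = α + β)).filter (fun p => p.1 = α) =
      ((decompose 𝒜 f).support ×ˢ (decompose 𝒜 i).support).filter
        (fun p => p.1 = α ∧ p.2 = β) := by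
    ext p
    simp only [Finset.mem_filter, Finset.mem_product]
    constructor
    · rintro ⟨⟨hp, hsum⟩, hp1⟩
      subst hp1
      exact ⟨hp, rfl, by exact add_left_cancel hsum⟩
    · rintro ⟨hp, hp1, hp2⟩
      subst hp1; subst hp2
      exact ⟨⟨hp, rfl⟩, rfl⟩
  have h2 : (((decompose 𝒜 f).support ×ˢ (decompose 𝒜 i).support).filter
        (fun p => p.1 + p.2 = α + β)).filter (fun p => ¬ p.1 = α) =
      ((decompose 𝒜 f).support ×ˢ (decompose 𝒜 i).support).filter
        (fun p => p.1 + p.2 = α + β ∧ p.1 ≠ α) := by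
    rw [Finset.filter_filter]
  have h3 : ∑ p ∈ ((decompose 𝒜 f).support ×ˢ (decompose 𝒜 i).support).filter
        (fun p => p.1 = α ∧ p.2 = β),
      GradedRing.proj 𝒜 p.1 f * GradedRing.proj 𝒜 p.2 i
      = GradedRing.proj 𝒜 α f * GradedRing.proj 𝒜 β i := by
    by_cases hβ : β ∈ (decompose 𝒜 i).support
    · rw [show ((decompose 𝒜 f).support ×ˢ (decompose 𝒜 i).support).filter
          (fun p => p.1 = α ∧ p.2 = β) = {(α, β)} from ?_, Finset.sum_singleton]
      ext p
      simp only [Finset.mem_filter, Finset.mem_product, Finset.mem_singleton]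
      constructor
      · rintro ⟨_, h, h'⟩; exact Prod.ext h h'
      · rintro rfl; exact ⟨⟨hαmem, hβ⟩, rfl, rfl⟩
    · rw [show ((decompose 𝒜 f).support ×ˢ (decompose 𝒜 i).support).filter
          (fun p => p.1 = α ∧ p.2 = β) = ∅ from ?_, Finset.sum_empty]
      · have : GradedRing.proj 𝒜 β i = 0 := by
          by_contra h
          exact hβ ((GradedRing.mem_support_iff 𝒜 i β).2 h)
        rw [this, mul_zero]
      · ext p
        simp only [Finset.mem_filter, Finset.mem_product, Finset.notMem_empty, iff_false]
        rintro ⟨⟨_, hp2⟩, _, rfl⟩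
        exact hβ hp2
  rw [h1, h2, h3] at hsplit
  rw [← hsplit]

lemma top_expand_gt {f : R} {α : Γ} (hαtop : ∀ γ ∈ (decompose 𝒜 f).support, γ ≤ α)
    (i : R) (β : Γ) {p : Γ × Γ}
    (hp : p ∈ ((decompose 𝒜 f).support ×ˢ (decompose 𝒜 i).support).filter
          (fun p => p.1 + p.2 = α + β ∧ p.1 ≠ α)) : β < p.2 ∧ p.2 ∈ (decompose 𝒜 i).support := by
  simp only [Finset.mem_filter, Finset.mem_product] at hp
  obtain ⟨⟨hp1, hp2⟩, hsum, hne⟩ := hp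
  have h1 : p.1 < α := lt_of_le_of_ne (hαtop _ hp1) hne
  have : α + β < α + p.2 := by
    calc α + β = p.1 + p.2 := hsum.symm
    _ < α + p.2 := by exact add_lt_add_left h1 p.2
  exact ⟨lt_of_add_lt_add_left this, hp2⟩
lemma proj_hom_mul {a : R} {α : Γ} (ha : a ∈ 𝒜 α) (x : R) (β : Γ) :
    GradedRing.proj 𝒜 (α + β) (a * x) = a * GradedRing.proj 𝒜 β x := by
  rw [GradedRing.proj_apply, GradedRing.proj_apply]
  letI : AddLeftCancelMonoid Γ := { (inferInstance : AddCommMonoid Γ) with add_left_cancel := fun a b c h => add_left_cancel h }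
  exact DirectSum.coe_decompose_mul_add_of_left_mem 𝒜 ha

/-- `C(I)` (scratch copy of homC) -/
def homCX (I : Ideal R) : Ideal R :=
  Ideal.span {x | ∃ f ∈ I, ∃ γ : Γ, x = GradedRing.proj 𝒜 γ f}

/-- components ideal of a single element -/
def homCe (f : R) : Ideal R := Ideal.span {x | ∃ γ : Γ, x = GradedRing.proj 𝒜 γ f}

/-- `C(fI)` -/
def homCmul (f : R) (I : Ideal R) : Ideal R :=
  Ideal.span {x | ∃ i ∈ I, ∃ γ : Γ, x = GradedRing.proj 𝒜 γ (f * i)}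

lemma mem_homCX {I : Ideal R} {i : R} (hi : i ∈ I) (γ : Γ) :
    GradedRing.proj 𝒜 γ i ∈ homCX 𝒜 I :=
  Ideal.subset_span ⟨i, hi, γ, rfl⟩

lemma le_homCX (I : Ideal R) : I ≤ homCX 𝒜 I := by
  intro f hf
  rw [← sum_proj 𝒜 f]
  exact Ideal.sum_mem _ fun γ _ => mem_homCX 𝒜 hf γ

lemma mem_homCe (f : R) (γ : Γ) : GradedRing.proj 𝒜 γ f ∈ homCe 𝒜 f :=
  Ideal.subset_span ⟨γ, rfl⟩

lemma mem_homCmul {I : Ideal R} {i : R} (f : R) (hi : i ∈ I) (γ : Γ) :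
    GradedRing.proj 𝒜 γ (f * i) ∈ homCmul 𝒜 f I :=
  Ideal.subset_span ⟨i, hi, γ, rfl⟩

/-- components of `a*x` for homogeneous `a` lie in `(a) * C(I)` when `x ∈ I`. -/
lemma proj_hom_mul_mem {a : R} {α : Γ} (ha : a ∈ 𝒜 α) {I : Ideal R} {i : R} (hi : i ∈ I)
    (γ : Γ) : GradedRing.proj 𝒜 γ (a * i) ∈ Ideal.span {a} * homCX 𝒜 I := by
  have hexp : GradedRing.proj 𝒜 γ (a * i) =
      ∑ δ ∈ (decompose 𝒜 i).support, GradedRing.proj 𝒜 γ (a * GradedRing.proj 𝒜 δ i) := by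
    conv_lhs => rw [← sum_proj 𝒜 i]
    rw [Finset.mul_sum, map_sum]
  rw [hexp]
  apply Ideal.sum_mem
  intro δ _
  have hmem : a * GradedRing.proj 𝒜 δ i ∈ 𝒜 (α + δ) :=
    SetLike.mul_mem_graded ha (proj_mem 𝒜 δ i)
  rw [proj_of_mem 𝒜 hmem]
  split_ifs
  · exact Ideal.mul_mem_mul (Ideal.subset_span rfl) (mem_homCX 𝒜 hi δ)
  · exact zero_mem _

theorem DMmixed : ∀ (n : ℕ) (f : R) (I : Ideal R),
    (decompose 𝒜 f).support.card ≤ n + 1 →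
    homCe 𝒜 f * homCX 𝒜 I ^ (n + 1) ≤ homCmul 𝒜 f I * homCX 𝒜 I ^ n := by
  intro n
  induction n with
  | zero =>
    intro f I _hcard
    rw [pow_one, pow_zero, mul_one, homCe, homCX, Ideal.span_mul_span', Ideal.span_le]
    rintro x ⟨y, ⟨γ, rfl⟩, z, ⟨i, hi, δ, rfl⟩, rfl⟩
    show GradedRing.proj 𝒜 γ f * GradedRing.proj 𝒜 δ i ∈ homCmul 𝒜 f I
    by_cases hγ : γ ∈ (decompose 𝒜 f).support
    · have hf : f = GradedRing.proj 𝒜 γ f := by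
        have hsing : (decompose 𝒜 f).support = {γ} :=
          Finset.eq_singleton_iff_unique_mem.2 ⟨hγ, fun δ' hδ' => by
            by_contra hne
            have : 1 < (decompose 𝒜 f).support.card :=
              Finset.one_lt_card.2 ⟨δ', hδ', γ, hγ, hne⟩
            omega⟩
        conv_lhs => rw [← sum_proj 𝒜 f, hsing, Finset.sum_singleton]
      have hfmem : GradedRing.proj 𝒜 γ f ∈ 𝒜 γ := proj_mem 𝒜 γ f
      have heq : GradedRing.proj 𝒜 γ f * GradedRing.proj 𝒜 δ i
          = GradedRing.proj 𝒜 (γ + δ) (f * i) := by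
        conv_rhs => rw [hf]
        rw [proj_hom_mul 𝒜 hfmem]
      rw [heq]
      exact mem_homCmul 𝒜 f hi (γ + δ)
    · have : GradedRing.proj 𝒜 γ f = 0 := by
        by_contra h; exact hγ ((GradedRing.mem_support_iff 𝒜 f γ).2 h)
      rw [this, zero_mul]; exact zero_mem _
  | succ n IH =>
    intro f I hcard
    by_cases hf0 : f = 0
    · have hbot : homCe 𝒜 f ≤ ⊥ := by
        rw [homCe, Ideal.span_le]
        rintro x ⟨γ, rfl⟩
        rw [hf0, _root_.map_zero]
        exact Submodule.zero_mem (⊥ : Ideal R)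
      calc homCe 𝒜 f * homCX 𝒜 I ^ (n + 1 + 1)
          ≤ ⊥ * homCX 𝒜 I ^ (n + 1 + 1) := Ideal.mul_mono_left hbot
        _ = ⊥ := by rw [Submodule.bot_mul]
        _ ≤ _ := bot_le
    have hne : (decompose 𝒜 f).support.Nonempty := by
      rw [Finset.nonempty_iff_ne_empty]
      intro h
      apply hf0
      rw [← sum_proj 𝒜 f, h, Finset.sum_empty]
    set α := (decompose 𝒜 f).support.max' hne with hα_def
    have hαmem : α ∈ (decompose 𝒜 f).support := Finset.max'_mem _ _
    have hαtop : ∀ γ ∈ (decompose 𝒜 f).support, γ ≤ α := fun γ hγ => Finset.le_max' _ _ hγ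
    set a := GradedRing.proj 𝒜 α f with ha_def
    have ha : a ∈ 𝒜 α := proj_mem 𝒜 α f
    set f' := f - a with hf'_def
    have hproj' : ∀ γ, GradedRing.proj 𝒜 γ f' =
        if γ = α then 0 else GradedRing.proj 𝒜 γ f := by
      intro γ
      rw [hf'_def, map_sub, proj_of_mem 𝒜 ha]
      split_ifs with h
      · subst h; rw [ha_def, sub_self]
      · rw [sub_zero]
    have hsupp' : (decompose 𝒜 f').support ⊆ (decompose 𝒜 f).support.erase α := by
      intro γ hγ
      rw [GradedRing.mem_support_iff, hproj' γ] at hγ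
      split_ifs at hγ with h
      · exact absurd rfl hγ
      · exact Finset.mem_erase.2 ⟨h, (GradedRing.mem_support_iff 𝒜 f γ).2 hγ⟩
    have hcard' : (decompose 𝒜 f').support.card ≤ n + 1 := by
      have h1 := Finset.card_le_card hsupp'
      rw [Finset.card_erase_of_mem hαmem] at h1
      omega
    have IHf' := IH f' I hcard'
    have hCf'I : homCmul 𝒜 f' I ≤ homCmul 𝒜 f I + Ideal.span {a} * homCX 𝒜 I := by
      rw [homCmul, Ideal.span_le]
      rintro x ⟨i, hi, γ, rfl⟩
      have hfi : f' * i = f * i - a * i := by rw [hf'_def]; ring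
      rw [hfi, map_sub]
      exact Submodule.sub_mem _ (Submodule.mem_sup_left (mem_homCmul 𝒜 f hi γ))
        (Submodule.mem_sup_right (proj_hom_mul_mem 𝒜 ha hi γ))
    have step1 : homCe 𝒜 f' * homCX 𝒜 I ^ (n + 1) ≤
        homCmul 𝒜 f I * homCX 𝒜 I ^ n + Ideal.span {a} * homCX 𝒜 I ^ (n + 1) := by
      calc homCe 𝒜 f' * homCX 𝒜 I ^ (n + 1) ≤ homCmul 𝒜 f' I * homCX 𝒜 I ^ n := IHf'
        _ ≤ (homCmul 𝒜 f I + Ideal.span {a} * homCX 𝒜 I) * homCX 𝒜 I ^ n :=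
            Ideal.mul_mono_left hCf'I
        _ = homCmul 𝒜 f I * homCX 𝒜 I ^ n + Ideal.span {a} * homCX 𝒜 I ^ (n + 1) := by
            rw [add_mul, mul_assoc, ← pow_succ']
    have TOP : ∀ i ∈ I, ∀ (m : ℕ) (β : Γ),
        ((decompose 𝒜 i).support.filter (fun γ => β < γ)).card ≤ m →
        ∀ x ∈ homCX 𝒜 I ^ (n + 1),
        a * GradedRing.proj 𝒜 β i * x ∈ homCmul 𝒜 f I * homCX 𝒜 I ^ (n + 1) := by
      intro i hi m
      induction m with
      | zero =>
        intro β hm x hx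
        rw [ha_def, top_expand 𝒜 hαmem hαtop i β, sub_mul]
        refine Submodule.sub_mem _ (Ideal.mul_mem_mul (mem_homCmul 𝒜 f hi (α + β)) hx) ?_
        rw [Finset.sum_mul]
        apply Ideal.sum_mem
        intro p hp
        exfalso
        obtain ⟨hgt, hp2mem⟩ := top_expand_gt 𝒜 hαtop i β hp
        have hmem : p.2 ∈ (decompose 𝒜 i).support.filter (fun γ => β < γ) :=
          Finset.mem_filter.2 ⟨hp2mem, hgt⟩
        have := Finset.card_pos.2 ⟨p.2, hmem⟩
        omega
      | succ m IHm =>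
        intro β hm x hx
        rw [ha_def, top_expand 𝒜 hαmem hαtop i β, sub_mul]
        refine Submodule.sub_mem _ (Ideal.mul_mem_mul (mem_homCmul 𝒜 f hi (α + β)) hx) ?_
        rw [Finset.sum_mul]
        apply Ideal.sum_mem
        intro p hp
        obtain ⟨hgt, hp2mem⟩ := top_expand_gt 𝒜 hαtop i β hp
        have hp1 : p.1 ≠ α := by
          simp only [Finset.mem_filter] at hp
          exact hp.2.2
        have hfp1 : GradedRing.proj 𝒜 p.1 f = GradedRing.proj 𝒜 p.1 f' := by
          rw [hproj' p.1, if_neg hp1]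
        have hz : GradedRing.proj 𝒜 p.1 f' * x ∈
            homCmul 𝒜 f I * homCX 𝒜 I ^ n + Ideal.span {a} * homCX 𝒜 I ^ (n + 1) :=
          step1 (Ideal.mul_mem_mul (mem_homCe 𝒜 f' p.1) hx)
        rw [Ideal.add_eq_sup, Submodule.mem_sup] at hz
        obtain ⟨z₁, hz₁, z₂, hz₂, hzsum⟩ := hz
        have hre : GradedRing.proj 𝒜 p.1 f * GradedRing.proj 𝒜 p.2 i * x =
            z₁ * GradedRing.proj 𝒜 p.2 i + z₂ * GradedRing.proj 𝒜 p.2 i := by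
          rw [← add_mul, hzsum, hfp1]; ring
        rw [hre]
        refine Submodule.add_mem _ ?_ ?_
        · have h1 : z₁ * GradedRing.proj 𝒜 p.2 i ∈
              homCmul 𝒜 f I * homCX 𝒜 I ^ n * homCX 𝒜 I :=
            Ideal.mul_mem_mul hz₁ (mem_homCX 𝒜 hi p.2)
          rwa [mul_assoc, ← pow_succ] at h1
        · obtain ⟨w, hw, hwz⟩ := Submodule.mem_span_singleton_mul.1 hz₂
          have hre2 : z₂ * GradedRing.proj 𝒜 p.2 i =
              a * GradedRing.proj 𝒜 p.2 i * w := by rw [← hwz]; ring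
          rw [hre2]
          refine IHm p.2 ?_ w hw
          have hsub2 : (decompose 𝒜 i).support.filter (fun γ => p.2 < γ) ⊆
              (decompose 𝒜 i).support.filter (fun γ => β < γ) := by
            intro γ hγ
            rw [Finset.mem_filter] at hγ ⊢
            exact ⟨hγ.1, hgt.trans hγ.2⟩
          have hss : (decompose 𝒜 i).support.filter (fun γ => p.2 < γ) ⊂
              (decompose 𝒜 i).support.filter (fun γ => β < γ) :=
            (Finset.ssubset_iff_of_subset hsub2).2
              ⟨p.2, Finset.mem_filter.2 ⟨hp2mem, hgt⟩,
                fun hc => lt_irrefl _ (Finset.mem_filter.1 hc).2⟩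
          have hlt := Finset.card_lt_card hss
          exact Nat.lt_succ_iff.1 (lt_of_lt_of_le hlt hm)
    have APART : Ideal.span {a} * homCX 𝒜 I ^ (n + 1 + 1) ≤
        homCmul 𝒜 f I * homCX 𝒜 I ^ (n + 1) := by
      rw [Ideal.span_singleton_mul_le_iff]
      intro z hz
      rw [pow_succ'] at hz
      refine Submodule.mul_induction_on hz ?_ ?_
      · intro c hc x hx
        refine Submodule.span_induction ?_ ?_ ?_ ?_ hc
        · rintro c ⟨i, hi, δ, rfl⟩
          have := TOP i hi _ δ le_rfl x hx
          rwa [mul_assoc] at this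
        · rw [zero_mul, mul_zero]; exact zero_mem _
        · intro u v _ _ hu hv
          have heq : a * ((u + v) * x) = a * (u * x) + a * (v * x) := by ring
          rw [heq]
          exact Submodule.add_mem _ hu hv
        · intro r u _ hu
          have heq : a * (r • u * x) = r • (a * (u * x)) := by
            simp only [smul_eq_mul]; ring
          rw [heq]
          exact Submodule.smul_mem _ r hu
      · intro u v hu hv
        rw [mul_add]
        exact Submodule.add_mem _ hu hv
    have hCfdec : homCe 𝒜 f ≤ Ideal.span {a} + homCe 𝒜 f' := by
      rw [homCe, Ideal.span_le]
      rintro x ⟨γ, rfl⟩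
      by_cases h : γ = α
      · subst h
        exact Submodule.mem_sup_left (Ideal.subset_span rfl)
      · have : GradedRing.proj 𝒜 γ f = GradedRing.proj 𝒜 γ f' := by
          rw [hproj' γ, if_neg h]
        rw [this]
        exact Submodule.mem_sup_right (mem_homCe 𝒜 f' γ)
    have hf'part : homCe 𝒜 f' * homCX 𝒜 I ^ (n + 1 + 1) ≤
        homCmul 𝒜 f I * homCX 𝒜 I ^ (n + 1) + Ideal.span {a} * homCX 𝒜 I ^ (n + 1 + 1) := by
      calc homCe 𝒜 f' * homCX 𝒜 I ^ (n + 1 + 1)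
          = homCe 𝒜 f' * homCX 𝒜 I ^ (n + 1) * homCX 𝒜 I := by rw [mul_assoc, ← pow_succ]
        _ ≤ (homCmul 𝒜 f I * homCX 𝒜 I ^ n + Ideal.span {a} * homCX 𝒜 I ^ (n + 1)) *
              homCX 𝒜 I := Ideal.mul_mono_left step1
        _ = homCmul 𝒜 f I * homCX 𝒜 I ^ (n + 1) +
              Ideal.span {a} * homCX 𝒜 I ^ (n + 1 + 1) := by
            rw [add_mul, mul_assoc, mul_assoc, ← pow_succ, ← pow_succ]
    calc homCe 𝒜 f * homCX 𝒜 I ^ (n + 1 + 1)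
        ≤ (Ideal.span {a} + homCe 𝒜 f') * homCX 𝒜 I ^ (n + 1 + 1) :=
          Ideal.mul_mono_left hCfdec
      _ = Ideal.span {a} * homCX 𝒜 I ^ (n + 1 + 1) +
            homCe 𝒜 f' * homCX 𝒜 I ^ (n + 1 + 1) := add_mul _ _ _
      _ ≤ homCmul 𝒜 f I * homCX 𝒜 I ^ (n + 1) := by
          rw [Ideal.add_eq_sup]
          refine sup_le APART (hf'part.trans ?_)
          rw [Ideal.add_eq_sup]
          exact sup_le le_rfl APART
end DMSection

section StarLemmas

variable {R : Type*} [CommRing R] [IsDomain R]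
  {K : Type*} [Field K] [Algebra R K] [IsFractionRing R K]

lemma fi_one_ne_zero : (1 : FractionalIdeal (nonZeroDivisors R) K) ≠ 0 := by
  intro h
  have h1 : (1 : K) ∈ (1 : FractionalIdeal (nonZeroDivisors R) K) := one_mem_one _
  rw [h, FractionalIdeal.mem_zero_iff] at h1
  exact one_ne_zero h1

lemma algMap_ne_zero {x : R} (hx : x ≠ 0) : algebraMap R K x ≠ 0 :=
  (map_ne_zero_iff _ (IsFractionRing.injective R K)).2 hx

variable (s : StarOp R K)

lemma sone : s.toFun 1 = 1 := by
  have := s.map_span 1 one_ne_zero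
  rwa [spanSingleton_one] at this

lemma sstar_ne_zero {F : FractionalIdeal (nonZeroDivisors R) K} (hF : F ≠ 0) :
    s.toFun F ≠ 0 := by
  intro h
  exact hF (FractionalIdeal.le_zero_iff.1 (h ▸ s.le_star F hF))

lemma coeIdeal_ne_zero_of_ne {I : Ideal R} (hI : I ≠ 0) :
    (I : FractionalIdeal (nonZeroDivisors R) K) ≠ 0 := by
  rw [FractionalIdeal.coeIdeal_ne_zero]
  rwa [Ideal.zero_eq_bot] at hI

lemma skey {F : FractionalIdeal (nonZeroDivisors R) K} (hF : F ≠ 0) {w : K} (hw : w ≠ 0)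
    {I : Ideal R} (hI : I ≠ 0) (hsI : s.toFun ↑I = 1)
    (h : ∀ i ∈ I, w * algebraMap R K i ∈ F) : w ∈ s.toFun F := by
  have hIco : (I : FractionalIdeal (nonZeroDivisors R) K) ≠ 0 := coeIdeal_ne_zero_of_ne hI
  have hle : spanSingleton (nonZeroDivisors R) w * ↑I ≤ F := by
    rw [mul_le]
    intro a ha b hb
    obtain ⟨z, rfl⟩ := (mem_spanSingleton _).1 ha
    obtain ⟨i, hi, rfl⟩ := (mem_coeIdeal _).1 hb
    rw [smul_mul_assoc]
    exact Submodule.smul_mem (F : Submodule R K) z (h i hi)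
  have hne : spanSingleton (nonZeroDivisors R) w * ↑I ≠ 0 := by
    obtain ⟨i₀, hi₀, hi₀ne⟩ := Submodule.exists_mem_ne_zero_of_ne_bot
      (by rwa [Ideal.zero_eq_bot] at hI : I ≠ ⊥)
    intro hzero
    have hmem : w * algebraMap R K i₀ ∈ spanSingleton (nonZeroDivisors R) w * ↑I :=
      mul_mem_mul (mem_spanSingleton_self _ _) (FractionalIdeal.mem_coeIdeal_of_mem _ hi₀)
    rw [hzero, FractionalIdeal.mem_zero_iff] at hmem
    exact (mul_ne_zero hw (algMap_ne_zero hi₀ne)) hmem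
  have hmono := s.mono _ _ hne hF hle
  rw [s.map_smul w hw _ hIco, hsI, mul_one] at hmono
  exact spanSingleton_le_iff_mem.1 hmono

lemma sprod {I J : Ideal R} (hI : I ≠ 0) (hJ : J ≠ 0) (hsI : s.toFun ↑I = 1)
    (hsJ : s.toFun ↑J = 1) : s.toFun ↑(I * J) = 1 := by
  have hIJ : I * J ≠ 0 := by
    rw [Ideal.zero_eq_bot, ne_eq, Ideal.mul_eq_bot]
    rw [Ideal.zero_eq_bot] at hI hJ
    tauto
  have hIJco : ((I * J : Ideal R) : FractionalIdeal (nonZeroDivisors R) K) ≠ 0 :=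
    coeIdeal_ne_zero_of_ne hIJ
  apply le_antisymm
  · have h1 : ((I * J : Ideal R) : FractionalIdeal (nonZeroDivisors R) K) ≤ ↑I :=
      (FractionalIdeal.coeIdeal_le_coeIdeal K).2 Ideal.mul_le_left
    have := s.mono _ _ hIJco (coeIdeal_ne_zero_of_ne hI) h1
    rwa [hsI] at this
  · have hJle : (↑J : FractionalIdeal (nonZeroDivisors R) K) ≤ s.toFun ↑(I * J) := by
      intro x hx
      obtain ⟨j, hj, rfl⟩ := (mem_coeIdeal _).1 hx
      by_cases hj0 : j = 0
      · subst hj0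
        rw [_root_.map_zero]
        have := Submodule.zero_mem (s.toFun ↑(I * J) : Submodule R K)
        rwa [FractionalIdeal.mem_coe] at this
      · refine skey s hIJco (algMap_ne_zero hj0) hI hsI ?_
        intro i hi
        rw [← _root_.map_mul]
        refine FractionalIdeal.mem_coeIdeal_of_mem _ ?_
        rw [mul_comm j i]
        exact Ideal.mul_mem_mul hi hj
    have hs2 := s.mono _ _ (coeIdeal_ne_zero_of_ne hJ) (sstar_ne_zero s hIJco) hJle
    rw [s.idem _ hIJco, hsJ] at hs2
    exact hs2

lemma ipow_ne_zero {I : Ideal R} (hI : I ≠ 0) (k : ℕ) : I ^ k ≠ 0 := by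
  induction k with
  | zero =>
    rw [pow_zero, Ideal.one_eq_top, Ideal.zero_eq_bot]
    exact top_ne_bot
  | succ k IHk =>
    rw [pow_succ, Ideal.zero_eq_bot, ne_eq, Ideal.mul_eq_bot]
    rw [Ideal.zero_eq_bot] at hI IHk
    tauto

lemma spow {I : Ideal R} (hI : I ≠ 0) (hsI : s.toFun ↑I = 1) (k : ℕ) :
    s.toFun ↑(I ^ (k + 1)) = 1 := by
  induction k with
  | zero => rwa [pow_one]
  | succ k IHk =>
    rw [pow_succ]
    exact sprod s (ipow_ne_zero hI (k + 1)) hI IHk hsI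

end StarLemmas

section Assembly

open DirectSum

variable {Γ : Type*} [AddCommMonoid Γ] [LinearOrder Γ] [IsOrderedCancelAddMonoid Γ] [DecidableEq Γ]
  {R : Type*} [CommRing R] [IsDomain R]
  (𝒜 : Γ → AddSubgroup R) [GradedRing 𝒜]
  {K : Type*} [Field K] [Algebra R K] [IsFractionRing R K]

lemma DMmaster {I₀ I : Ideal R} (h₀ : IsHomIdeal 𝒜 I₀) {r : R}
    (hr : ∀ i ∈ I, r * i ∈ I₀) (γ : Γ) {m : ℕ}
    (hm : (decompose 𝒜 r).support.card = m + 1) :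
    ∀ x ∈ homCX 𝒜 I ^ (m + 1), GradedRing.proj 𝒜 γ r * x ∈ I₀ := by
  intro x hx
  have hCfI : homCmul 𝒜 r I ≤ I₀ := by
    rw [homCmul, Ideal.span_le]
    rintro y ⟨i, hi, δ, rfl⟩
    exact h₀ _ (hr i hi) δ
  have h1 : GradedRing.proj 𝒜 γ r * x ∈ homCe 𝒜 r * homCX 𝒜 I ^ (m + 1) :=
    Ideal.mul_mem_mul (mem_homCe 𝒜 r γ) hx
  have h2 := DMmixed 𝒜 m r I (le_of_eq hm) h1
  exact (le_trans Ideal.mul_le_left hCfI) h2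

lemma pow_le_homCX_pow (I : Ideal R) (k : ℕ) : I ^ k ≤ homCX 𝒜 I ^ k := by
  induction k with
  | zero => rw [pow_zero, pow_zero]
  | succ k IHk =>
    rw [pow_succ, pow_succ]
    exact Ideal.mul_mono IHk (le_homCX 𝒜 I)

end Assembly

lemma mem_starBarSet {R : Type*} [CommRing R] [IsDomain R]
    {K : Type*} [Field K] [Algebra R K] [IsFractionRing R K]
    {s : StarOp R K} {A : FractionalIdeal (nonZeroDivisors R) K} {x : K} :
    x ∈ starBarSet K s.toFun A ↔ ∃ I : Ideal R, (I ≠ 0 ∧ s.toFun ↑I = 1) ∧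
      ∀ i ∈ I, x * algebraMap R K i ∈ A := by
  simp only [starBarSet, Set.mem_iUnion, Set.mem_setOf_eq, exists_prop]

/-- the stable star operation `★̄` associated to a classical star operation is
homogeneous preserving. -/
theorem stmt_5
    {Γ : Type*} [AddCommMonoid Γ] [LinearOrder Γ] [IsOrderedCancelAddMonoid Γ] [DecidableEq Γ]
    {R : Type*} [CommRing R] [IsDomain R]
    (𝒜 : Γ → AddSubgroup R) [GradedRing 𝒜]
    (K : Type*) [Field K] [Algebra R K] [IsFractionRing R K]
    (s : StarOp R K) (A : FractionalIdeal (nonZeroDivisors R) K)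
    (hA : A ≠ 0) (hhom : IsHomFrac 𝒜 K A) :
    ∃ B : FractionalIdeal (nonZeroDivisors R) K, B ≠ 0 ∧ IsHomFrac 𝒜 K B ∧
      {x : K | x ∈ B} = starBarSet K s.toFun A := by
    classical
  obtain ⟨t, ht0, thom, htle, hI₀hom⟩ := hhom
  have hta : algebraMap R K t ≠ 0 := algMap_ne_zero ht0
  have htopmem : (⊤ : Ideal R) ≠ 0 ∧
      s.toFun ((⊤ : Ideal R) : FractionalIdeal (nonZeroDivisors R) K) = 1 := by
    constructor
    · rw [Ideal.zero_eq_bot]; exact top_ne_bot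
    · rw [coeIdeal_top, sone s]
  -- the underlying submodule
  let Bsub : Submodule R K :=
  { carrier := starBarSet K s.toFun A
    zero_mem' := by
      refine mem_starBarSet.2 ⟨⊤, htopmem, ?_⟩
      intro i _
      rw [zero_mul]
      have := Submodule.zero_mem (A : Submodule R K)
      rwa [FractionalIdeal.mem_coe] at this
    add_mem' := by
      intro x y hx hy
      obtain ⟨I₁, ⟨hI₁0, hsI₁⟩, h₁⟩ := mem_starBarSet.1 hx
      obtain ⟨I₂, ⟨hI₂0, hsI₂⟩, h₂⟩ := mem_starBarSet.1 hy
      have hIJ : I₁ * I₂ ≠ 0 := by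
        rw [Ideal.zero_eq_bot, ne_eq, Ideal.mul_eq_bot]
        rw [Ideal.zero_eq_bot] at hI₁0 hI₂0
        tauto
      refine mem_starBarSet.2 ⟨I₁ * I₂, ⟨hIJ, sprod s hI₁0 hI₂0 hsI₁ hsI₂⟩, ?_⟩
      intro i hi
      have e1 : (x + y) * algebraMap R K i =
          x * algebraMap R K i + y * algebraMap R K i := add_mul _ _ _
      rw [e1]
      have := Submodule.add_mem (A : Submodule R K)
        (FractionalIdeal.mem_coe.2 (h₁ i (Ideal.mul_le_left hi)))
        (FractionalIdeal.mem_coe.2 (h₂ i (Ideal.mul_le_right hi)))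
      rwa [FractionalIdeal.mem_coe] at this
    smul_mem' := by
      intro c x hx
      obtain ⟨I₁, hI₁, h₁⟩ := mem_starBarSet.1 hx
      refine mem_starBarSet.2 ⟨I₁, hI₁, ?_⟩
      intro i hi
      rw [smul_mul_assoc]
      have := Submodule.smul_mem (A : Submodule R K) c
        (FractionalIdeal.mem_coe.2 (h₁ i hi))
      rwa [FractionalIdeal.mem_coe] at this }
  have hBle : Bsub ≤ (s.toFun A : Submodule R K) := by
    intro x hx
    obtain ⟨I₁, ⟨hI₁0, hsI₁⟩, h₁⟩ := mem_starBarSet.1 hx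
    by_cases hx0 : x = 0
    · subst hx0; exact Submodule.zero_mem _
    · exact FractionalIdeal.mem_coe.2 (skey s hA hx0 hI₁0 hsI₁ h₁)
  let B : FractionalIdeal (nonZeroDivisors R) K := ⟨Bsub, isFractional_of_le hBle⟩
  have hmemB : ∀ x : K, x ∈ B ↔ x ∈ starBarSet K s.toFun A := fun _ => Iff.rfl
  have hAB : ∀ x ∈ A, x ∈ B := by
    intro x hx
    refine (hmemB x).2 (mem_starBarSet.2 ⟨⊤, htopmem, ?_⟩)
    intro i _
    have e1 : x * algebraMap R K i = i • x := by rw [Algebra.smul_def, mul_comm]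
    rw [e1]
    have := Submodule.smul_mem (A : Submodule R K) i (FractionalIdeal.mem_coe.2 hx)
    rwa [FractionalIdeal.mem_coe] at this
  have hB0 : B ≠ 0 := by
    obtain ⟨x, hxA, hx0⟩ : ∃ x ∈ A, x ≠ 0 := by
      by_contra hcon
      push_neg at hcon
      exact hA (FractionalIdeal.le_zero_iff.1
        (fun x hx => (FractionalIdeal.mem_zero_iff _).2 (hcon x hx)))
    intro hB
    exact hx0 ((FractionalIdeal.mem_zero_iff _).1 (hB ▸ hAB x hxA))
  refine ⟨B, hB0, ⟨t, ht0, thom, ?_, ?_⟩, rfl⟩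
  · -- span t * B ≤ 1
    rw [mul_le]
    intro u hu y hy
    obtain ⟨z, rfl⟩ := (mem_spanSingleton _).1 hu
    rw [smul_mul_assoc]
    have hmain : algebraMap R K t * y ∈ (1 : FractionalIdeal (nonZeroDivisors R) K) := by
      obtain ⟨I₁, ⟨hI₁0, hsI₁⟩, h₁⟩ := mem_starBarSet.1 ((hmemB y).1 hy)
      by_cases hw0 : algebraMap R K t * y = 0
      · rw [hw0]
        have := Submodule.zero_mem ((1 : FractionalIdeal (nonZeroDivisors R) K) : Submodule R K)
        rwa [FractionalIdeal.mem_coe] at this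
      · have hk := skey s fi_one_ne_zero hw0 hI₁0 hsI₁ (fun i hi => by
          have e1 : algebraMap R K t * y * algebraMap R K i =
              algebraMap R K t * (y * algebraMap R K i) := by ring
          rw [e1]
          exact htle (mul_mem_mul (mem_spanSingleton_self _ _) (h₁ i hi)))
        rwa [sone s] at hk
    have := Submodule.smul_mem ((1 : FractionalIdeal (nonZeroDivisors R) K) : Submodule R K) z
      (FractionalIdeal.mem_coe.2 hmain)
    rwa [FractionalIdeal.mem_coe] at this
  · -- IsHomIdeal of idealOf (span t * B)
    intro f hf γ
    rw [idealOf, Submodule.mem_comap, Algebra.linearMap_apply, FractionalIdeal.coe_mul,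
      coe_spanSingleton] at hf
    obtain ⟨y, hyB, hty⟩ := Submodule.mem_span_singleton_mul.1 hf
    by_cases hf0 : f = 0
    · subst hf0
      rw [_root_.map_zero]
      exact Ideal.zero_mem _
    obtain ⟨I, ⟨hI0, hsI⟩, hy⟩ := mem_starBarSet.1 hyB
    have hr : ∀ i ∈ I, f * i ∈ idealOf K
        (spanSingleton (nonZeroDivisors R) (algebraMap R K t) * A) := by
      intro i hi
      rw [idealOf, Submodule.mem_comap, Algebra.linearMap_apply, FractionalIdeal.coe_mul,
        coe_spanSingleton]
      refine Submodule.mem_span_singleton_mul.2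
        ⟨y * algebraMap R K i, FractionalIdeal.mem_coe.2 (hy i hi), ?_⟩
      rw [← mul_assoc, hty, _root_.map_mul]
    have hfne : (DirectSum.decompose 𝒜 f).support.Nonempty := by
      rw [Finset.nonempty_iff_ne_empty]
      intro h
      apply hf0
      rw [← sum_proj 𝒜 f, h, Finset.sum_empty]
    obtain ⟨m, hm⟩ : ∃ m, (DirectSum.decompose 𝒜 f).support.card = m + 1 :=
      ⟨(DirectSum.decompose 𝒜 f).support.card - 1,
        (Nat.succ_pred_eq_of_pos (Finset.card_pos.2 hfne)).symm⟩
    have master := DMmaster 𝒜 hI₀hom hr γ hm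
    have hI'0 : homCX 𝒜 I ^ (m + 1) ≠ 0 := by
      intro h
      refine ipow_ne_zero hI0 (m + 1) ?_
      rw [Ideal.zero_eq_bot] at h ⊢
      exact le_bot_iff.1 (h ▸ pow_le_homCX_pow 𝒜 I (m + 1))
    have hI'star : s.toFun ↑(homCX 𝒜 I ^ (m + 1)) = 1 := by
      apply le_antisymm
      · have := s.mono _ 1 (coeIdeal_ne_zero_of_ne hI'0) fi_one_ne_zero coeIdeal_le_one
        rwa [sone s] at this
      · have h2 := s.mono _ _ (coeIdeal_ne_zero_of_ne (ipow_ne_zero hI0 (m + 1)))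
          (coeIdeal_ne_zero_of_ne hI'0)
          ((FractionalIdeal.coeIdeal_le_coeIdeal K).2 (pow_le_homCX_pow 𝒜 I (m + 1)))
        rwa [spow s hI0 hsI m] at h2
    rw [idealOf, Submodule.mem_comap, Algebra.linearMap_apply, FractionalIdeal.coe_mul,
      coe_spanSingleton]
    refine Submodule.mem_span_singleton_mul.2
      ⟨(algebraMap R K t)⁻¹ * algebraMap R K (GradedRing.proj 𝒜 γ f), ?_, ?_⟩
    · show _ ∈ starBarSet K s.toFun A
      refine mem_starBarSet.2 ⟨homCX 𝒜 I ^ (m + 1), ⟨hI'0, hI'star⟩, ?_⟩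
      intro i' hi'
      have hz := master i' hi'
      rw [idealOf, Submodule.mem_comap, Algebra.linearMap_apply, FractionalIdeal.coe_mul,
        coe_spanSingleton] at hz
      obtain ⟨w, hwA, hw⟩ := Submodule.mem_span_singleton_mul.1 hz
      have e1 : (algebraMap R K t)⁻¹ * algebraMap R K (GradedRing.proj 𝒜 γ f) *
          algebraMap R K i' = w := by
        rw [mul_assoc, ← _root_.map_mul, ← hw, inv_mul_cancel_left₀ hta]
      rw [e1]
      exact FractionalIdeal.mem_coe.1 hwA
    · rw [mul_inv_cancel_left₀ hta]
end
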